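/- The function k ↦ sup_{p ∈ (0,1)} L(k,p) is strictly decreasing for 1 ≤ k ≤ 8 and strictly increasing for k ≥ 8 (i.e., it is unimodal with minimum at k = 8). -/

import Mathlib

open Real Set Filter

/-- Expected number of tests per person in the Dorfman two-stage procedure
with group size `k` and prevalence `p`: `E 1 p = 1` and
`E k p = 1 - (1-p)^k + 1/k` for `k ≥ 2`. -/
noncomputable def E (k : ℕ) (p : ℝ) : ℝ :=
  if k = 1 then 1 else 1 - (1 - p) ^ k + 1 / k

/-- Optimal expected number of tests per person: infimum over group sizes `k ≥ 1`. -/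
noncomputable def Estar (p : ℝ) : ℝ := ⨅ k : ℕ+, E k p

/-- Loss of using group size `k` at prevalence `p`. -/
noncomputable def L (k : ℕ) (p : ℝ) : ℝ := E k p - Estar p

set_option maxHeartbeats 1000000

lemma E_one (p : ℝ) : E 1 p = 1 := by simp [E]

lemma E_eq {k : ℕ} (hk : 2 ≤ k) (p : ℝ) : E k p = 1 - (1-p)^k + 1/k := by
  rw [E, if_neg (by omega)]

lemma E_nonneg (j : ℕ+) {p : ℝ} (hp : p ∈ Ioo (0:ℝ) 1) : 0 ≤ E (j:ℕ) p := by
  obtain ⟨hp0, hp1⟩ := hp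
  rcases eq_or_lt_of_le j.one_le with h | h
  · rw [← h]; simp [E_one]
  · have h2 : 2 ≤ (j:ℕ) := h
    rw [E_eq h2]
    have hq1 : (1-p)^(j:ℕ) ≤ 1 := pow_le_one₀ (by linarith) (by linarith)
    have : (0:ℝ) < 1/(j:ℕ) := by positivity
    linarith

lemma bddBelow_rangeE {p : ℝ} (hp : p ∈ Ioo (0:ℝ) 1) :
    BddBelow (range fun j : ℕ+ => E (j:ℕ) p) := by
  refine ⟨0, ?_⟩
  rintro x ⟨j, rfl⟩
  exact E_nonneg j hp

lemma Estar_le {p : ℝ} (hp : p ∈ Ioo (0:ℝ) 1) (j : ℕ+) : Estar p ≤ E (j:ℕ) p :=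
  ciInf_le (bddBelow_rangeE hp) j

lemma Estar_nonneg {p : ℝ} (hp : p ∈ Ioo (0:ℝ) 1) : 0 ≤ Estar p :=
  le_ciInf fun j => E_nonneg j hp

lemma E_le_two {k : ℕ} (hk : 1 ≤ k) {p : ℝ} (hp : p ∈ Ioo (0:ℝ) 1) : E k p ≤ 2 := by
  obtain ⟨hp0, hp1⟩ := hp
  rcases eq_or_lt_of_le hk with h | h
  · rw [← h]; simp [E_one]
  · have h2 : 2 ≤ k := h
    rw [E_eq h2]
    have hq : (0:ℝ) ≤ (1-p)^k := pow_nonneg (by linarith) k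
    have : 1/(k:ℝ) ≤ 1 := by
      rw [div_le_one (by positivity)]
      exact_mod_cast hk
    linarith

lemma bddAbove_imageL {k : ℕ} (hk : 1 ≤ k) : BddAbove (L k '' Ioo (0:ℝ) 1) := by
  refine ⟨2, ?_⟩
  rintro x ⟨p, hp, rfl⟩
  have h1 := E_le_two hk hp
  have h2 := Estar_nonneg hp
  unfold L; linarith

lemma nonempty_imageL (k : ℕ) : (L k '' Ioo (0:ℝ) 1).Nonempty :=
  ⟨L k (1/2), mem_image_of_mem _ (by norm_num)⟩

lemma sup_ge {k : ℕ} (hk : 1 ≤ k) {p : ℝ} (hp : p ∈ Ioo (0:ℝ) 1) {n : ℕ} (hn : 1 ≤ n) :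
    E k p - E n p ≤ sSup (L k '' Ioo (0:ℝ) 1) := by
  have h1 : Estar p ≤ E n p := Estar_le hp ⟨n, hn⟩
  have h2 : L k p ≤ sSup (L k '' Ioo (0:ℝ) 1) :=
    le_csSup (bddAbove_imageL hk) (mem_image_of_mem _ hp)
  have h3 : E k p - E n p ≤ L k p := by rw [L]; linarith
  exact h3.trans h2

-- upper bound via pointwise bound
lemma sup_ub {m : ℕ} (hm : 2 ≤ m) {c : ℝ} (hc : 0 ≤ c)
    (hpoly : ∀ q : ℝ, 0 ≤ q → q ≤ 1 → ∀ j : ℕ, 2 ≤ j → j < m → q^j - q^m ≤ 1/j + c) :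
    sSup (L m '' Ioo (0:ℝ) 1) ≤ 1/m + c := by
  apply csSup_le (nonempty_imageL m)
  rintro x ⟨p, hp, rfl⟩
  obtain ⟨hp0, hp1⟩ := hp
  have hq0 : (0:ℝ) ≤ 1 - p := by linarith
  have hq1 : (1:ℝ) - p ≤ 1 := by linarith
  have key : E m p - (1/m + c) ≤ Estar p := by
    apply le_ciInf
    intro j
    rw [E_eq hm]
    rcases eq_or_lt_of_le j.one_le with h | h
    · rw [← h]
      simp only [PNat.one_coe, E_one]
      have : (0:ℝ) ≤ (1-p)^m := pow_nonneg hq0 m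
      linarith
    · have hj2 : 2 ≤ (j:ℕ) := h
      rw [E_eq hj2]
      rcases lt_or_ge (j:ℕ) m with hjm | hjm
      · have := hpoly (1-p) hq0 hq1 (j:ℕ) hj2 hjm
        linarith
      · have hpow : (1-p)^(j:ℕ) ≤ (1-p)^m := pow_le_pow_of_le_one hq0 hq1 hjm
        have : (0:ℝ) < 1/(j:ℕ) := by positivity
        linarith
  unfold L; linarith

-- witness for lower bound, k ≤ 7 : sSup ≥ 1/k - 2/10^4
lemma sup_lb {k : ℕ} (hk1 : 1 ≤ k) (hk7 : k ≤ 7) :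
    1/(k:ℝ) - 2/10^4 ≤ sSup (L k '' Ioo (0:ℝ) 1) := by
  obtain ⟨q, hqdef⟩ : ∃ q:ℝ, q = 1 - 1/10^8 := ⟨_, rfl⟩
  have hp : (1/10^8 : ℝ) ∈ Ioo (0:ℝ) 1 := by norm_num
  have h := sup_ge hk1 hp (n := 10000) (by norm_num)
  have hq0 : (0:ℝ) ≤ q := by rw [hqdef]; norm_num
  have hq1 : q ≤ 1 := by rw [hqdef]; norm_num
  have hEN : E 10000 (1/10^8) = 1 - q^10000 + 1/10000 := by
    rw [E_eq (by norm_num), hqdef]; norm_num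
  have hbern : 1 - 1/10^4 ≤ q^10000 := by
    have h2 := one_add_mul_le_pow (a := -(1/10^8 : ℝ)) (by norm_num) 10000
    have h3 : ((10000:ℕ):ℝ) * -(1/10^8) = -(1/10^4) := by norm_num
    rw [h3] at h2
    calc (1:ℝ) - 1/10^4 = 1 + -(1/10^4) := by ring
    _ ≤ (1 + -(1/10^8))^10000 := h2
    _ = q^10000 := by rw [hqdef]; norm_num
  rcases eq_or_lt_of_le hk1 with h1 | h1
  · rw [← h1] at h ⊢
    rw [E_one, hEN] at h
    push_cast
    linarith
  · have hk2 : 2 ≤ k := h1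
    rw [E_eq hk2, hEN, ← hqdef] at h
    have hqk : q^k ≤ 1 := pow_le_one₀ hq0 hq1
    have hd : q^10000 - q^k ≥ -(1/10^4) := by linarith
    have hcast : (1:ℝ)/10000 = 1/10^4 := by norm_num
    linarith

-- rpow gain: q^(n - n/(m+1)) - q^n ≥ q^n * (n/(m+1)) * (1-q)
lemma rpow_gain {q : ℝ} (hq0 : 0 < q) (hq1 : q < 1) (n m : ℕ) :
    q^(n:ℕ) * ((n:ℝ)/((m:ℝ)+1)) * (1-q) ≤ q ^ ((n:ℝ) - (n:ℝ)/((m:ℝ)+1)) - q^(n:ℕ) := by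
  have hm1 : (0:ℝ) < (m:ℝ)+1 := by positivity
  have ha0 : (0:ℝ) ≤ (n:ℝ)/((m:ℝ)+1) := by positivity
  set a : ℝ := (n:ℝ)/((m:ℝ)+1) with hadef
  have hsub : q ^ ((n:ℝ) - a) = q^(n:ℕ) * q^(-a) := by
    rw [Real.rpow_sub hq0, Real.rpow_neg hq0.le, div_eq_mul_inv, Real.rpow_natCast]
  rw [hsub]
  have hexp : 1 + a*(1-q) ≤ q^(-a) := by
    rw [Real.rpow_def_of_pos hq0]
    have hlog : Real.log q ≤ q - 1 := Real.log_le_sub_one_of_pos hq0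
    have h1 : a*(1-q) ≤ -a * Real.log q := by nlinarith
    have h2 : (1 + (-a * Real.log q)) ≤ Real.exp (-a * Real.log q) := by
      linarith [Real.add_one_le_exp (-a * Real.log q)]
    calc 1 + a*(1-q) ≤ 1 + (-a * Real.log q) := by linarith
    _ ≤ Real.exp (-a * Real.log q) := h2
    _ = Real.exp (Real.log q * -a) := by ring_nf
  have hqn : (0:ℝ) < q^(n:ℕ) := pow_pos hq0 n
  nlinarith [hexp, hqn]

-- Bernoulli-based: from q^n - q^m ≥ 1/n, get q^n*(1-q) ≥ 1/(n*(m-n))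
lemma key_gain {q : ℝ} (hq0 : 0 < q) (hq1 : q < 1) {n m : ℕ} (h2 : 2 ≤ n) (hnm : n < m)
    (hkey : 1/(n:ℝ) ≤ q^n - q^m) :
    1/(((m:ℝ)+1)*((m:ℝ)-2)) ≤ q ^ ((n:ℝ) - (n:ℝ)/((m:ℝ)+1)) - q^n := by
  have hn0 : (0:ℝ) < n := by positivity
  have hmn : (0:ℝ) < (m:ℝ) - (n:ℝ) := by
    have : (n:ℝ) < m := by exact_mod_cast hnm
    linarith
  have hbern : 1 - q^(m-n) ≤ ((m:ℝ)-(n:ℝ))*(1-q) := by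
    have h := one_add_mul_le_pow (a := q - 1) (by linarith) (m-n)
    have hc : ((m-n:ℕ):ℝ) = (m:ℝ)-(n:ℝ) := by
      push_cast [Nat.cast_sub hnm.le]; ring
    rw [hc, show (1:ℝ)+(q-1) = q from by ring] at h
    linarith
  have hsplit : q^n * q^(m-n) = q^m := by
    rw [← pow_add]; congr 1; omega
  -- q^n*(1 - q^(m-n)) = q^n - q^m ≥ 1/n
  have hstep : 1/(n:ℝ) ≤ q^n * (((m:ℝ)-(n:ℝ))*(1-q)) := by
    have hqn : (0:ℝ) < q^n := pow_pos hq0 n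
    calc 1/(n:ℝ) ≤ q^n - q^m := hkey
    _ = q^n * (1 - q^(m-n)) := by rw [mul_sub, mul_one, hsplit]
    _ ≤ q^n * (((m:ℝ)-(n:ℝ))*(1-q)) := by
        apply mul_le_mul_of_nonneg_left hbern hqn.le
  have hgain := rpow_gain hq0 hq1 n m
  -- q^n * (n/(m+1)) * (1-q) ≥ (n/(m+1)) * (1/n) / (m-n) ≥ 1/((m+1)(m-2))
  have hm1 : (0:ℝ) < (m:ℝ)+1 := by positivity
  have hfinal : 1/(((m:ℝ)+1)*((m:ℝ)-(n:ℝ))) ≤ q^n * ((n:ℝ)/((m:ℝ)+1)) * (1-q) := by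
    rw [div_le_iff₀ (by positivity)]
    have expand : q^n * ((n:ℝ)/((m:ℝ)+1)) * (1-q) * (((m:ℝ)+1)*((m:ℝ)-(n:ℝ)))
        = (q^n * (((m:ℝ)-(n:ℝ))*(1-q))) * (n:ℝ) := by field_simp
    rw [expand]
    calc (1:ℝ) = (1/(n:ℝ)) * (n:ℝ) := by field_simp
    _ ≤ (q^n * (((m:ℝ)-(n:ℝ))*(1-q))) * (n:ℝ) := by
        apply mul_le_mul_of_nonneg_right hstep hn0.le
  have hmono : 1/(((m:ℝ)+1)*((m:ℝ)-2)) ≤ 1/(((m:ℝ)+1)*((m:ℝ)-(n:ℝ))) := by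
    have hn2 : (2:ℝ) ≤ (n:ℝ) := by exact_mod_cast h2
    have hd1 : (0:ℝ) < ((m:ℝ)+1)*((m:ℝ)-(n:ℝ)) := by positivity
    apply one_div_le_one_div_of_le hd1
    nlinarith
  linarith

lemma sup_increasing {k : ℕ} (hk : 8 ≤ k) :
    sSup (L k '' Ioo (0:ℝ) 1) < sSup (L (k+1) '' Ioo (0:ℝ) 1) := by
  have hk1 : 1 ≤ k := by omega
  have hk2 : 2 ≤ k := by omega
  have hkR : (8:ℝ) ≤ (k:ℝ) := by exact_mod_cast hk
  obtain ⟨δ₀, hδ₀def⟩ : ∃ d:ℝ, d = (41/50)^3 - 1/3 - (41/50)^8 := ⟨_, rfl⟩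
  have hδ₀pos : 0 < δ₀ := by rw [hδ₀def]; norm_num
  -- lower bound on Mk
  have hlb : 1/(k:ℝ) + δ₀ ≤ sSup (L k '' Ioo (0:ℝ) 1) := by
    have hp : (9/50:ℝ) ∈ Ioo (0:ℝ) 1 := by norm_num
    have h := sup_ge hk1 hp (n := 3) (by norm_num)
    rw [E_eq hk2, E_eq (by norm_num : 2 ≤ 3)] at h
    have hq : (1:ℝ) - 9/50 = 41/50 := by norm_num
    rw [hq] at h
    have hqk : ((41:ℝ)/50)^k ≤ (41/50)^8 :=
      pow_le_pow_of_le_one (by norm_num) (by norm_num) hk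
    have hqk0 : (0:ℝ) ≤ (41/50:ℝ)^k := by positivity
    rw [hδ₀def]
    norm_num at h ⊢
    linarith
  obtain ⟨D, hDdef⟩ : ∃ d:ℝ, d = 1/(((k:ℝ)+1)*((k:ℝ)-2)) - 1/((k:ℝ)*((k:ℝ)+1)) := ⟨_, rfl⟩
  have hDpos : 0 < D := by
    rw [hDdef]
    have h1 : (0:ℝ) < ((k:ℝ)+1)*((k:ℝ)-2) := by nlinarith
    have h2 : ((k:ℝ)+1)*((k:ℝ)-2) < (k:ℝ)*((k:ℝ)+1) := by nlinarith
    have := one_div_lt_one_div_of_lt h1 h2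
    linarith
  obtain ⟨ε, hεdef⟩ : ∃ e:ℝ, e = min (δ₀/4) (D/4) := ⟨_, rfl⟩
  have hεpos : 0 < ε := by rw [hεdef]; positivity
  have hεδ : ε ≤ δ₀/4 := by rw [hεdef]; exact min_le_left _ _
  have hεD : ε ≤ D/4 := by rw [hεdef]; exact min_le_right _ _
  -- near-optimal p
  obtain ⟨y, hy, hylt⟩ := exists_lt_of_lt_csSup (nonempty_imageL k)
    (show sSup (L k '' Ioo (0:ℝ) 1) - ε < sSup (L k '' Ioo (0:ℝ) 1) by linarith)
  obtain ⟨p, hp, rfl⟩ := hy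
  rw [L] at hylt
  -- near-optimal j
  have hinf : Estar p = ⨅ j : ℕ+, E (j:ℕ) p := rfl
  obtain ⟨j, hj⟩ : ∃ j : ℕ+, E ((j:ℕ)) p < Estar p + ε := by
    apply exists_lt_of_ciInf_lt
    rw [← hinf]; linarith
  have h₁ : sSup (L k '' Ioo (0:ℝ) 1) - 2*ε < E k p - E (j:ℕ) p := by linarith
  obtain ⟨hp0, hp1⟩ := hp
  obtain ⟨q, hqdef⟩ : ∃ q:ℝ, q = 1 - p := ⟨_, rfl⟩
  have hq0 : 0 < q := by rw [hqdef]; linarith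
  have hq1 : q < 1 := by rw [hqdef]; linarith
  have hEk : E k p = 1 - q^k + 1/(k:ℝ) := by rw [E_eq hk2, ← hqdef]
  have hqk01 : (0:ℝ) ≤ q^k := by positivity
  have hkinv : (0:ℝ) < 1/(k:ℝ) := by positivity
  -- j ≥ 2
  have hj2 : 2 ≤ (j:ℕ) := by
    rcases eq_or_lt_of_le j.one_le with h | h
    · exfalso
      rw [← h] at h₁
      simp only [PNat.one_coe, E_one] at h₁
      have : E k p - 1 ≤ 1/(k:ℝ) := by rw [hEk]; linarith
      linarith
    · exact h
  have hEj : E (j:ℕ) p = 1 - q^(j:ℕ) + 1/((j:ℕ):ℝ) := by rw [E_eq hj2, ← hqdef]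
  have hjinv : (0:ℝ) < 1/((j:ℕ):ℝ) := by positivity
  -- j < k
  have hjk : (j:ℕ) < k := by
    by_contra hcon
    push_neg at hcon
    have hpow : q^(j:ℕ) ≤ q^k := pow_le_pow_of_le_one hq0.le hq1.le hcon
    have : E k p - E (j:ℕ) p ≤ 1/(k:ℝ) := by rw [hEk, hEj]; linarith
    linarith
  -- key inequality
  have hkey : 1/((j:ℕ):ℝ) ≤ q^(j:ℕ) - q^k := by
    have : E k p - E (j:ℕ) p = q^(j:ℕ) - q^k + 1/(k:ℝ) - 1/((j:ℕ):ℝ) := by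
      rw [hEk, hEj]; ring
    rw [this] at h₁
    linarith
  have hgain := key_gain hq0 hq1 hj2 hjk hkey
  -- construct p'
  obtain ⟨a, hadef⟩ : ∃ a:ℝ, a = (k:ℝ)/((k:ℝ)+1) := ⟨_, rfl⟩
  have ha0 : 0 < a := by rw [hadef]; positivity
  obtain ⟨q', hq'def⟩ : ∃ x:ℝ, x = q ^ a := ⟨_, rfl⟩
  have hq'0 : 0 < q' := by rw [hq'def]; exact Real.rpow_pos_of_pos hq0 a
  have hq'1 : q' < 1 := by rw [hq'def]; exact Real.rpow_lt_one hq0.le hq1 ha0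
  have hp' : (1 - q') ∈ Ioo (0:ℝ) 1 := ⟨by linarith, by linarith⟩
  have hsup1 := sup_ge (k := k+1) (by omega) hp' (n := (j:ℕ)) (by omega)
  -- power identities
  have hkR1 : ((k:ℝ)+1) ≠ 0 := by positivity
  have e1 : q'^(k+1) = q^k := by
    rw [hq'def, ← Real.rpow_natCast (q ^ a) (k+1), ← Real.rpow_mul hq0.le,
      show a*((k+1:ℕ):ℝ) = ((k:ℕ):ℝ) by rw [hadef]; push_cast; field_simp,
      Real.rpow_natCast]
  have e2 : q'^(j:ℕ) = q ^ (((j:ℕ):ℝ) - ((j:ℕ):ℝ)/((k:ℝ)+1)) := by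
    rw [hq'def, ← Real.rpow_natCast (q ^ a) (j:ℕ), ← Real.rpow_mul hq0.le]
    congr 1
    rw [hadef]; field_simp; ring
  -- E values at p'
  have hE1 : E (k+1) (1-q') = 1 - q'^(k+1) + 1/((k:ℝ)+1) := by
    rw [E_eq (by omega : 2 ≤ k+1), show (1:ℝ) - (1-q') = q' from by ring]
    push_cast; ring
  have hEj' : E (j:ℕ) (1-q') = 1 - q'^(j:ℕ) + 1/((j:ℕ):ℝ) := by
    rw [E_eq hj2, show (1:ℝ) - (1-q') = q' from by ring]
  rw [hE1, hEj', e1, e2] at hsup1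
  have harith : 1/((k:ℝ)+1) - 1/(k:ℝ) = -(1/((k:ℝ)*((k:ℝ)+1))) := by
    field_simp; ring
  -- assemble
  have hbig : sSup (L k '' Ioo (0:ℝ) 1) - 2*ε + D ≤ sSup (L (k+1) '' Ioo (0:ℝ) 1) := by
    have hdiff : E k p - E (j:ℕ) p = q^(j:ℕ) - q^k + 1/(k:ℝ) - 1/((j:ℕ):ℝ) := by
      rw [hEk, hEj]; ring
    rw [hdiff] at h₁
    rw [hDdef]
    linarith
  linarith

lemma poly_small (q:ℝ) (h0 : 0 ≤ q) (h1 : q ≤ 1) (j m : ℕ) (hj2 : 2 ≤ j) (hjm : j < m)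
    (hm7 : m ≤ 7) : q^j - q^m ≤ 1/(j:ℝ) := by
  have hm3 : 3 ≤ m := by omega
  interval_cases m <;> interval_cases j <;> push_cast
  · nlinarith [sq_nonneg q, sq_nonneg (1-q)]
  · nlinarith [sq_nonneg (q^2 - 1/2)]
  · nlinarith [sq_nonneg q, sq_nonneg (1-q), sq_nonneg (q - 3/4)]
  · nlinarith [sq_nonneg q, sq_nonneg (1-q), sq_nonneg (q - 3/4), sq_nonneg (q^2-1/2)]
  · nlinarith [sq_nonneg q, sq_nonneg (1-q), sq_nonneg (q - 3/4), sq_nonneg (q^2-1/2)]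
  · nlinarith [sq_nonneg q, sq_nonneg (1-q), sq_nonneg (q - 4/5), sq_nonneg (q^2-1/2)]
  · nlinarith [sq_nonneg q, sq_nonneg (1-q), sq_nonneg (q - 3/4), sq_nonneg (q^2-1/2), sq_nonneg (q^2 - 3/5)]
  · nlinarith [sq_nonneg (q^3 - 1/2), sq_nonneg q, sq_nonneg (1-q)]
  · nlinarith [sq_nonneg q, sq_nonneg (1-q), sq_nonneg (q^2 - 2/3), sq_nonneg (q^2-1/2)]
  · nlinarith [sq_nonneg q, sq_nonneg (1-q), sq_nonneg (q - 5/6), sq_nonneg (q^2-1/2), sq_nonneg (q^2 - 7/10)]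
  · nlinarith [sq_nonneg q, sq_nonneg (1-q), sq_nonneg (q - 3/4), sq_nonneg (q^2-1/2), sq_nonneg (q^2 - 3/5), sq_nonneg (q^3 - 1/2)]
  · nlinarith [sq_nonneg q, sq_nonneg (1-q), sq_nonneg (q - 5/6), sq_nonneg (q^2-1/2), sq_nonneg (q^2 - 7/10), sq_nonneg (q^3-1/2)]
  · nlinarith [sq_nonneg q, sq_nonneg (1-q), sq_nonneg (q - 5/6), sq_nonneg (q^2-1/2), sq_nonneg (q^2 - 7/10), sq_nonneg (q^3-1/2)]
  · nlinarith [sq_nonneg q, sq_nonneg (1-q), sq_nonneg (q - 5/6), sq_nonneg (q^2-1/2), sq_nonneg (q^2 - 7/10), sq_nonneg (q^3-1/2)]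
  · have h2 : q^6 ≤ q^2 := pow_le_pow_of_le_one h0 h1 (by norm_num)
    nlinarith [mul_nonneg (sub_nonneg.2 h2) (sub_nonneg.2 h1),
      mul_nonneg (by linarith : (0:ℝ) ≤ q + 1/3) (sq_nonneg (q - 2/3))]

lemma poly8 (q:ℝ) (h0 : 0 ≤ q) (h1 : q ≤ 1) (j : ℕ) (hj2 : 2 ≤ j) (hjm : j < 8) :
    q^j - q^8 ≤ 1/(j:ℝ) + 1/57 := by
  interval_cases j <;> push_cast
  · -- j = 2 via sixth powers
    obtain ⟨x, hx⟩ : ∃ x:ℝ, x = q^6 := ⟨_, rfl⟩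
    have hx0 : 0 ≤ x := by rw [hx]; positivity
    have hx1 : x ≤ 1 := by rw [hx]; exact pow_le_one₀ h0 h1
    have key : x*(1-x)^3 ≤ 27/256 := by
      nlinarith [mul_nonneg (sq_nonneg (x - 1/4)) (sq_nonneg (x-1)), sq_nonneg (x-1/4),
        mul_nonneg hx0 (sub_nonneg.2 hx1)]
    have hid : (q^2 - q^8)^6 = (x*(1-x)^3)^2 := by rw [hx]; ring
    have hnn : 0 ≤ q^2 - q^8 := by
      have : q^8 ≤ q^2 := pow_le_pow_of_le_one h0 h1 (by norm_num); linarith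
    by_contra hc
    push_neg at hc
    have h6 : (1/2 + 1/57 : ℝ)^6 < (q^2-q^8)^6 := by
      apply pow_lt_pow_left₀ hc (by norm_num); norm_num
    rw [hid] at h6
    have hnn2 : 0 ≤ x*(1-x)^3 :=
      mul_nonneg hx0 (pow_nonneg (by linarith) 3)
    have hsq : (x*(1-x)^3)^2 ≤ (27/256:ℝ)^2 := pow_le_pow_left₀ hnn2 key 2
    norm_num at h6 hsq ⊢
    linarith
  · -- j = 3 via fifth powers (AM-GM)
    obtain ⟨x, hx⟩ : ∃ x:ℝ, x = q^5 := ⟨_, rfl⟩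
    have hx0 : 0 ≤ x := by rw [hx]; positivity
    have hx1 : x ≤ 1 := by rw [hx]; exact pow_le_one₀ h0 h1
    have hQ : 0 ≤ x^6 - 17/4*x^5 + 427/64*x^4 - 563/128*x^3 + 3125/4096*x^2 + 3125/16384*x + 9375/262144 := by
      nlinarith [sq_nonneg (x^2 - 17/8*x + 1), sq_nonneg (x^2-x), sq_nonneg (x-1), sq_nonneg x,
        mul_nonneg hx0 (sub_nonneg.2 hx1), sq_nonneg (x^3 - 17/8*x^2),
        mul_nonneg (mul_nonneg hx0 hx0) (sub_nonneg.2 hx1)]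
    have key : x^3*(1-x)^5 ≤ 84375/16777216 := by nlinarith [mul_nonneg (sq_nonneg (x - 3/8)) hQ]
    have hid : (q^3 - q^8)^5 = x^3*(1-x)^5 := by rw [hx]; ring
    have hnn : 0 ≤ q^3 - q^8 := by
      have : q^8 ≤ q^3 := pow_le_pow_of_le_one h0 h1 (by norm_num); linarith
    by_contra hc
    push_neg at hc
    have h5 : (1/3 + 1/57 : ℝ)^5 < (q^3-q^8)^5 := by
      apply pow_lt_pow_left₀ hc (by norm_num); norm_num
    rw [hid] at h5
    norm_num at h5 key
    linarith
  · nlinarith [sq_nonneg (q^4 - 1/2)]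
  · nlinarith [sq_nonneg (q^3 - 1/2), sq_nonneg q, sq_nonneg (q^2 - 7/10),
      mul_nonneg h0 (sub_nonneg.2 h1), sq_nonneg (q^4 - 3/4),
      pow_le_pow_of_le_one h0 h1 (by norm_num : 5 ≤ 8)]
  · nlinarith [mul_nonneg (sq_nonneg (q^2 - 3/4)) (by nlinarith [sq_nonneg (q^2 + 1/4)] : (0:ℝ) ≤ q^4 + q^2/2 + 3/16)]
  · have h2 : q^7 ≤ q^2 := pow_le_pow_of_le_one h0 h1 (by norm_num)
    nlinarith [mul_nonneg (sub_nonneg.2 h2) (sub_nonneg.2 h1),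
      mul_nonneg (by linarith : (0:ℝ) ≤ q + 1/3) (sq_nonneg (q - 2/3))]

lemma sup_decreasing {k : ℕ} (hk1 : 1 ≤ k) (hk8 : k < 8) :
    sSup (L (k+1) '' Ioo (0:ℝ) 1) < sSup (L k '' Ioo (0:ℝ) 1) := by
  by_cases hk7 : k = 7
  · subst hk7
    have hub : sSup (L 8 '' Ioo (0:ℝ) 1) ≤ 1/(8:ℕ) + 1/57 :=
      sup_ub (by norm_num) (by norm_num) (fun q h0 h1 j hj2 hjm => poly8 q h0 h1 j hj2 hjm)
    have hlb := sup_lb (k := 7) (by norm_num) (by norm_num)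
    have : ((8:ℕ):ℝ) = 8 := by norm_num
    rw [this] at hub
    have h7 : ((7:ℕ):ℝ) = 7 := by norm_num
    rw [h7] at hlb
    calc sSup (L (7+1) '' Ioo (0:ℝ) 1) ≤ 1/8 + 1/57 := hub
    _ < 1/7 - 2/10^4 := by norm_num
    _ ≤ sSup (L 7 '' Ioo (0:ℝ) 1) := hlb
  · have hk6 : k ≤ 6 := by omega
    have hub : sSup (L (k+1) '' Ioo (0:ℝ) 1) ≤ 1/((k+1:ℕ):ℝ) + 0 :=
      sup_ub (by omega) le_rfl
        (fun q h0 h1 j hj2 hjm => by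
          have := poly_small q h0 h1 j (k+1) hj2 hjm (by omega)
          linarith)
    have hlb := sup_lb hk1 (by omega)
    have hkR1 : (1:ℝ) ≤ (k:ℝ) := by exact_mod_cast hk1
    have hkR6 : (k:ℝ) ≤ 6 := by exact_mod_cast hk6
    have hmid : 1/((k+1:ℕ):ℝ) + 0 < 1/(k:ℝ) - 2/10^4 := by
      push_cast
      have h42 : (k:ℝ)*((k:ℝ)+1) ≤ 42 := by nlinarith
      have hpos : (0:ℝ) < (k:ℝ)*((k:ℝ)+1) := by positivity
      have hd : 1/42 ≤ 1/((k:ℝ)*((k:ℝ)+1)) := one_div_le_one_div_of_le hpos h42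
      have hid : 1/(k:ℝ) - 1/((k:ℝ)+1) = 1/((k:ℝ)*((k:ℝ)+1)) := by
        field_simp
        ring
      rw [add_zero]
      nlinarith
    calc sSup (L (k+1) '' Ioo (0:ℝ) 1) ≤ 1/((k+1:ℕ):ℝ) + 0 := hub
    _ < 1/(k:ℝ) - 2/10^4 := hmid
    _ ≤ sSup (L k '' Ioo (0:ℝ) 1) := hlb

theorem sup_loss_unimodal :
    (∀ k : ℕ, 1 ≤ k → k < 8 →
      sSup (L (k+1) '' Set.Ioo (0:ℝ) 1) < sSup (L k '' Set.Ioo (0:ℝ) 1)) ∧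
    (∀ k : ℕ, 8 ≤ k →
      sSup (L k '' Set.Ioo (0:ℝ) 1) < sSup (L (k+1) '' Set.Ioo (0:ℝ) 1)) := by
  exact ⟨fun k hk1 hk8 => sup_decreasing hk1 hk8, fun k hk => sup_increasing hk⟩
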